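/- Characterization of the interpretation of corrupted nat: for any valuation ρ and finite set Δ of exception names, ⟦{Δ}nat⟧ρ = { M | ∃n ∈ ℕ, M →* Sⁿ Φ }, where Φ is one of 0, ✠, or raise ε for some ε ∈ Δ. -/

import Mathlib

/-- Exception names (a countable set, taken to be ℕ; the fixed bijection φ
with ℕ is the identity). -/
abbrev ExnName := ℕ

/-- Terms of Fx extended with the daimon ✠ and the test construction `M; N`. -/
inductive Tm : Type
  | var : ℕ → Tm
  | lam : Tm → Tm
  | app : Tm → Tm → Tm
  | raise : ExnName → Tm
  | tryc : Tm → ExnName → Tm → Tm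
  | zero : Tm
  | succ : Tm
  | natrec : Tm
  | nil : Tm
  | cons : Tm
  | foldr : Tm
  | daimon : Tm
  | seq : Tm → Tm → Tm
  deriving DecidableEq

namespace Tm

/-- Shifting of de Bruijn indices ≥ k. -/
def lift : ℕ → Tm → Tm
  | k, var i => if i < k then var i else var (i + 1)
  | k, lam M => lam (lift (k + 1) M)
  | k, app M N => app (lift k M) (lift k N)
  | k, tryc M e N => tryc (lift k M) e (lift k N)
  | k, seq M N => seq (lift k M) (lift k N)
  | _, raise e => raise e
  | _, zero => zero
  | _, succ => succ
  | _, natrec => natrec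
  | _, nil => nil
  | _, cons => cons
  | _, foldr => foldr
  | _, daimon => daimon

/-- Capture-avoiding substitution `M[k := N]` (de Bruijn). -/
def subst : ℕ → Tm → Tm → Tm
  | k, N, var i => if i = k then N else if k < i then var (i - 1) else var i
  | k, N, lam M => lam (subst (k + 1) (lift 0 N) M)
  | k, N, app M P => app (subst k N M) (subst k N P)
  | k, N, tryc M e P => tryc (subst k N M) e (subst k N P)
  | k, N, seq M P => seq (subst k N M) (subst k N P)
  | _, _, raise e => raise e
  | _, _, zero => zero
  | _, _, succ => succ
  | _, _, natrec => natrec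
  | _, _, nil => nil
  | _, _, cons => cons
  | _, _, foldr => foldr
  | _, _, daimon => daimon

end Tm

open Tm

/-- Regular values of Fx. -/
inductive RegVal : Tm → Prop
  | lam (M) : RegVal (lam M)
  | zero : RegVal zero
  | succ : RegVal succ
  | succApp (N) : RegVal (app succ N)
  | natrec : RegVal natrec
  | natrec1 (M) : RegVal (app natrec M)
  | natrec2 (M N) : RegVal (app (app natrec M) N)
  | nil : RegVal nil
  | cons : RegVal cons
  | cons1 (M) : RegVal (app cons M)
  | cons2 (M N) : RegVal (app (app cons M) N)
  | foldr : RegVal foldr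
  | foldr1 (M) : RegVal (app foldr M)
  | foldr2 (M N) : RegVal (app (app foldr M) N)

/-- Values: regular values, exceptions and the daimon. -/
def IsVal (V : Tm) : Prop := RegVal V ∨ (∃ e, V = raise e) ∨ V = daimon

/-- The notion of reduction ▷ of Fx extended with the daimon rules. -/
inductive Head : Tm → Tm → Prop
  | beta (M N) : Head (app (lam M) N) (subst 0 N M)
  | raiseApp (e M) : Head (app (raise e) M) (raise e)
  | tryCatch (e N) : Head (tryc (raise e) e N) N
  | tryOther (e e' N) : e ≠ e' → Head (tryc (raise e') e N) (raise e')
  | tryVal (V e N) : RegVal V → Head (tryc V e N) V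
  | recZero (X Y) : Head (app (app (app natrec X) Y) zero) X
  | recSucc (X Y N) :
      Head (app (app (app natrec X) Y) (app succ N))
        (app (app Y N) (app (app (app natrec X) Y) N))
  | recRaise (X Y e) : Head (app (app (app natrec X) Y) (raise e)) (raise e)
  | foldNil (X Y) : Head (app (app (app foldr X) Y) nil) X
  | foldCons (X Y E L) :
      Head (app (app (app foldr X) Y) (app (app cons E) L))
        (app (app (app Y E) L) (app (app (app foldr X) Y) L))
  | foldRaise (X Y e) : Head (app (app (app foldr X) Y) (raise e)) (raise e)
  | daimonApp (N) : Head (app daimon N) daimon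
  | tryDaimon (e N) : Head (tryc daimon e N) daimon
  | recDaimon (X Y) : Head (app (app (app natrec X) Y) daimon) daimon
  | foldDaimon (X Y) : Head (app (app (app foldr X) Y) daimon) daimon
  | seqDaimon (N) : Head (seq daimon N) N

/-- One-step reduction: compatible closure of ▷. -/
inductive Red : Tm → Tm → Prop
  | head {M N} : Head M N → Red M N
  | appL {M M' N} : Red M M' → Red (app M N) (app M' N)
  | appR {M N N'} : Red N N' → Red (app M N) (app M N')
  | lam {M M'} : Red M M' → Red (lam M) (lam M')
  | tryL {M M' e N} : Red M M' → Red (tryc M e N) (tryc M' e N)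
  | tryR {M e N N'} : Red N N' → Red (tryc M e N) (tryc M e N')
  | seqL {M M' N} : Red M M' → Red (seq M N) (seq M' N)
  | seqR {M N N'} : Red N N' → Red (seq M N) (seq M N')

/-- Many-step reduction. -/
abbrev RedStar : Tm → Tm → Prop := Relation.ReflTransGen Red

/-- Evaluation contexts of Fx. -/
inductive Ctx : Type
  | hole : Ctx
  | appl : Ctx → Tm → Ctx
  | tryd : Ctx → ExnName → Ctx
  | recd : Tm → Tm → Ctx → Ctx
  | foldd : Tm → Tm → Ctx → Ctx

namespace Ctx

/-- Filling the hole of a context with a term. -/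
def fill : Ctx → Tm → Tm
  | hole, M => M
  | appl C N, M => Tm.app (fill C M) N
  | tryd C e, M => Tm.tryc (fill C M) e Tm.daimon
  | recd X Y C, M => Tm.app (Tm.app (Tm.app Tm.natrec X) Y) (fill C M)
  | foldd X Y C, M => Tm.app (Tm.app (Tm.app Tm.foldr X) Y) (fill C M)

/-- Composition of contexts: `(C.comp D)[M] = C[D[M]]`. -/
def comp : Ctx → Ctx → Ctx
  | hole, D => D
  | appl C N, D => appl (comp C D) N
  | tryd C e, D => tryd (comp C D) e
  | recd X Y C, D => recd X Y (comp C D)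
  | foldd X Y C, D => foldd X Y (comp C D)

end Ctx

/-- Orthogonality: `M ⊥ C` iff `C[M] →* ✠`. -/
def Perp (M : Tm) (C : Ctx) : Prop := RedStar (C.fill M) Tm.daimon

/-- The orthogonal of a set of contexts. -/
def orth (S : Set Ctx) : Set Tm := { M | ∀ C ∈ S, Perp M C }

/-- `tryCtx Δ` is the context `try (… (try □ with ε₁ ↦ ✠) …) with εₙ ↦ ✠`,
for `Δ = {ε₁, …, εₙ}` enumerated in the order given by the fixed bijection
with ℕ (ε₁ innermost); it is the empty context when `Δ = ∅`. -/
def tryCtx (Δ : Finset ExnName) : Ctx := (Δ.sort (· ≤ ·)).foldl Ctx.tryd Ctx.hole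

/-- `lift_Δ(S)`: wrap each context of `S` inside the `try_Δ` handlers
(the handlers outermost). -/
def liftS (Δ : Finset ExnName) (S : Set Ctx) : Set Ctx :=
  (fun C => (tryCtx Δ).comp C) '' S

/-- `unlift_Δ(S)`: plug the `try_Δ` handlers inside each context of `S`. -/
def unliftS (Δ : Finset ExnName) (S : Set Ctx) : Set Ctx :=
  (fun C => C.comp (tryCtx Δ)) '' S

/-- Types of Fx; `union A Δ` is `A∪{Δ}`, `corrupt Δ A` is `{Δ}A`. -/
inductive Ty : Type
  | tvar : ℕ → Ty
  | nat : Ty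
  | list : Ty → Ty
  | arrow : Ty → Ty → Ty
  | all : Ty → Ty
  | union : Ty → Finset ExnName → Ty
  | corrupt : Finset ExnName → Ty → Ty
  deriving DecidableEq

/-- Extension of a valuation by a set of contexts for the bound type
variable 0 (de Bruijn). -/
def consVal (S : Set Ctx) (ρ : ℕ → Set Ctx) : ℕ → Set Ctx
  | 0 => S
  | i + 1 => ρ i

/-- The context interpretation `⟪A⟫ρ` of a type. -/
def CtxI : Ty → (ℕ → Set Ctx) → Set Ctx
  | .tvar i, ρ => ρ i
  | .nat, _ => {Ctx.recd Tm.daimon (Tm.lam (Tm.lam (Tm.var 0))) Ctx.hole}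
  | .list A, ρ =>
      (fun C => Ctx.foldd Tm.daimon
        (Tm.lam (Tm.lam (Tm.lam (Tm.seq (Ctx.fill C (Tm.var 2)) (Tm.var 0)))))
        Ctx.hole) '' CtxI A ρ
  | .arrow A B, ρ =>
      ⋃ (Δ : Finset ExnName),
        ⋃ N ∈ orth (liftS Δ (CtxI A ρ)), ⋃ C ∈ liftS Δ (CtxI B ρ),
          {Ctx.comp C (Ctx.appl Ctx.hole N)}
  | .all A, ρ => ⋃ (S : Set Ctx), ⋃ (_ : S.Nonempty), CtxI A (consVal S ρ)
  | .union A Δ, ρ => unliftS Δ (CtxI A ρ)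
  | .corrupt Δ A, ρ => liftS Δ (CtxI A ρ)

/-- The term interpretation `⟦A⟧ρ = ⟪A⟫ρ^⊥`. -/
def TmI (A : Ty) (ρ : ℕ → Set Ctx) : Set Tm := orth (CtxI A ρ)

/-! ### Auxiliary development for the characterization of `⟦{Δ}nat⟧ρ` -/

set_option maxHeartbeats 2000000

open Tm

/-- The term `λy.λx.x`. -/
abbrev Y0 : Tm := Tm.lam (Tm.lam (Tm.var 0))

/-- The term `natrec ✠ (λy.λx.x) M`. -/
abbrev natrecT (M : Tm) : Tm := Tm.app (Tm.app (Tm.app Tm.natrec Tm.daimon) Y0) M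

/-! #### Normal-form lemmas -/

lemma nr_var {i U} : ¬ Red (Tm.var i) U := by intro h; cases h with | head h => cases h
lemma nr_daimon {U} : ¬ Red Tm.daimon U := by intro h; cases h with | head h => cases h
lemma nr_raise {e U} : ¬ Red (Tm.raise e) U := by intro h; cases h with | head h => cases h
lemma nr_zero {U} : ¬ Red Tm.zero U := by intro h; cases h with | head h => cases h
lemma nr_succ {U} : ¬ Red Tm.succ U := by intro h; cases h with | head h => cases h
lemma nr_natrec {U} : ¬ Red Tm.natrec U := by intro h; cases h with | head h => cases h
lemma nr_nil {U} : ¬ Red Tm.nil U := by intro h; cases h with | head h => cases h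
lemma nr_cons {U} : ¬ Red Tm.cons U := by intro h; cases h with | head h => cases h
lemma nr_foldr {U} : ¬ Red Tm.foldr U := by intro h; cases h with | head h => cases h

lemma nr_lamvar {U} : ¬ Red (Tm.lam (Tm.var 0)) U := by
  intro h
  cases h with
  | head h => cases h
  | lam h => exact nr_var h

lemma nr_Y0 {U} : ¬ Red Y0 U := by
  intro h
  cases h with
  | head h => cases h
  | lam h => exact nr_lamvar h

lemma nr_natrec1 {U} : ¬ Red (Tm.app Tm.natrec Tm.daimon) U := by
  intro h
  cases h with
  | head h => cases h
  | appL h => exact nr_natrec h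
  | appR h => exact nr_daimon h

lemma nr_natrec2 {U} : ¬ Red (Tm.app (Tm.app Tm.natrec Tm.daimon) Y0) U := by
  intro h
  cases h with
  | head h => cases h
  | appL h => exact nr_natrec1 h
  | appR h => exact nr_Y0 h

lemma redstar_daimon {R} (h : RedStar Tm.daimon R) : R = Tm.daimon := by
  rcases h.cases_head with rfl | ⟨c, hc, _⟩
  · rfl
  · exact absurd hc nr_daimon

lemma redstar_raise {e R} (h : RedStar (Tm.raise e) R) : R = Tm.raise e := by
  rcases h.cases_head with h' | ⟨c, hc, _⟩
  · exact h'.symm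
  · exact absurd hc nr_raise

/-! #### Regular values are preserved by reduction -/

lemma regval_red {V U} (h : RegVal V) (hr : Red V U) : RegVal U := by
  cases h with
  | lam M =>
    cases hr with
    | head h => cases h
    | lam h => exact RegVal.lam _
  | zero => exact absurd hr nr_zero
  | succ => exact absurd hr nr_succ
  | natrec => exact absurd hr nr_natrec
  | nil => exact absurd hr nr_nil
  | cons => exact absurd hr nr_cons
  | foldr => exact absurd hr nr_foldr
  | succApp N =>
    cases hr with
    | head h => cases h
    | appL h => exact absurd h nr_succ
    | appR h => exact RegVal.succApp _
  | natrec1 M =>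
    cases hr with
    | head h => cases h
    | appL h => exact absurd h nr_natrec
    | appR h => exact RegVal.natrec1 _
  | natrec2 M N =>
    cases hr with
    | head h => cases h
    | appL h =>
      cases h with
      | head h => cases h
      | appL h => exact absurd h nr_natrec
      | appR h => exact RegVal.natrec2 _ _
    | appR h => exact RegVal.natrec2 _ _
  | cons1 M =>
    cases hr with
    | head h => cases h
    | appL h => exact absurd h nr_cons
    | appR h => exact RegVal.cons1 _
  | cons2 M N =>
    cases hr with
    | head h => cases h
    | appL h =>
      cases h with
      | head h => cases h
      | appL h => exact absurd h nr_cons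
      | appR h => exact RegVal.cons2 _ _
    | appR h => exact RegVal.cons2 _ _
  | foldr1 M =>
    cases hr with
    | head h => cases h
    | appL h => exact absurd h nr_foldr
    | appR h => exact RegVal.foldr1 _
  | foldr2 M N =>
    cases hr with
    | head h => cases h
    | appL h =>
      cases h with
      | head h => cases h
      | appL h => exact absurd h nr_foldr
      | appR h => exact RegVal.foldr2 _ _
    | appR h => exact RegVal.foldr2 _ _

lemma regval_redstar {V R} (h : RegVal V) (hr : RedStar V R) : RegVal R := by
  induction hr with
  | refl => exact h
  | tail _ h' ih => exact regval_red ih h'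

lemma regval_not_final {V R} (h : RegVal V) (hr : RedStar V R)
    (hR : R = Tm.daimon ∨ ∃ ε, R = Tm.raise ε) : False := by
  have := regval_redstar h hr
  rcases hR with rfl | ⟨ε, rfl⟩ <;> cases this

/-! #### Congruence lemmas for `RedStar` -/

lemma redstar_appR (X : Tm) {N N'} (h : RedStar N N') :
    RedStar (Tm.app X N) (Tm.app X N') :=
  Relation.ReflTransGen.lift (Tm.app X) (fun _ _ h => Red.appR h) _ _ h

lemma redstar_tryL (e : ExnName) (N : Tm) {M M'} (h : RedStar M M') :
    RedStar (Tm.tryc M e N) (Tm.tryc M' e N) :=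
  Relation.ReflTransGen.lift (fun M => Tm.tryc M e N) (fun _ _ h => Red.tryL h) _ _ h

lemma red_fill (C : Ctx) {M M'} (h : Red M M') : Red (C.fill M) (C.fill M') := by
  induction C with
  | hole => exact h
  | appl C N ih => exact Red.appL ih
  | tryd C e ih => exact Red.tryL ih
  | recd X Y C ih => exact Red.appR ih
  | foldd X Y C ih => exact Red.appR ih

lemma redstar_fill (C : Ctx) {M M'} (h : RedStar M M') :
    RedStar (C.fill M) (C.fill M') :=
  Relation.ReflTransGen.lift C.fill (fun _ _ h => red_fill C h) _ _ h

lemma fill_comp (C D : Ctx) (M : Tm) : (C.comp D).fill M = C.fill (D.fill M) := by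
  induction C <;> simp [Ctx.comp, Ctx.fill, *]

/-! #### The chain of try handlers -/

/-- `tryCtx` on an explicit list. -/
def tryList (L : List ExnName) : Ctx := L.foldl Ctx.tryd Ctx.hole

lemma tryList_fill_append (L : List ExnName) (a : ExnName) (T : Tm) :
    (tryList (L ++ [a])).fill T = Tm.tryc ((tryList L).fill T) a Tm.daimon := by
  simp [tryList, List.foldl_append, Ctx.fill]

lemma tryList_daimon (L : List ExnName) :
    RedStar ((tryList L).fill Tm.daimon) Tm.daimon := by
  induction L using List.reverseRecOn with
  | nil => exact .refl
  | append_singleton L a ih =>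
    rw [tryList_fill_append]
    exact (redstar_tryL a Tm.daimon ih).trans
      (.single (Red.head (Head.tryDaimon a Tm.daimon)))

lemma tryList_raise_not (L : List ExnName) (ε : ExnName) (h : ε ∉ L) :
    RedStar ((tryList L).fill (Tm.raise ε)) (Tm.raise ε) := by
  induction L using List.reverseRecOn with
  | nil => exact .refl
  | append_singleton L a ih =>
    rw [tryList_fill_append]
    have hL : ε ∉ L := fun h' => h (List.mem_append.2 (Or.inl h'))
    have ha : ε ≠ a := fun h' => h (List.mem_append.2 (Or.inr (by simp [h'])))
    exact (redstar_tryL a Tm.daimon (ih hL)).trans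
      (.single (Red.head (Head.tryOther a ε Tm.daimon (Ne.symm ha))))

lemma tryList_raise_mem (L : List ExnName) (ε : ExnName) (h : ε ∈ L) :
    RedStar ((tryList L).fill (Tm.raise ε)) Tm.daimon := by
  induction L using List.reverseRecOn with
  | nil => simp at h
  | append_singleton L a ih =>
    rw [tryList_fill_append]
    by_cases hL : ε ∈ L
    · exact (redstar_tryL a Tm.daimon (ih hL)).trans
        (.single (Red.head (Head.tryDaimon a Tm.daimon)))
    · have ha : ε = a := by
        rcases List.mem_append.1 h with h' | h'
        · exact absurd h' hL
        · simpa using h'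
      subst ha
      exact (redstar_tryL ε Tm.daimon (tryList_raise_not L ε hL)).trans
        (.single (Red.head (Head.tryCatch ε Tm.daimon)))

/-! #### Backward analysis of try handlers -/

lemma try_backward {e : ExnName} {R : Tm}
    (hR : R = Tm.daimon ∨ ∃ ε, R = Tm.raise ε) :
    ∀ {U}, RedStar U R → ∀ T, U = Tm.tryc T e Tm.daimon →
      (R = Tm.daimon ∧ (RedStar T Tm.daimon ∨ RedStar T (Tm.raise e))) ∨
      (∃ ε, R = Tm.raise ε ∧ ε ≠ e ∧ RedStar T (Tm.raise ε)) := by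
  intro U h
  induction h using Relation.ReflTransGen.head_induction_on with
  | refl =>
    intro T hT
    rcases hR with rfl | ⟨ε, rfl⟩ <;> simp at hT
  | head hstep htail ih =>
    intro T hT
    subst hT
    cases hstep with
    | head h =>
      cases h with
      | tryCatch =>
        have := redstar_daimon htail
        subst this
        exact Or.inl ⟨rfl, Or.inr .refl⟩
      | tryOther e e' N hne =>
        have := redstar_raise htail
        subst this
        exact Or.inr ⟨e', rfl, Ne.symm hne, .refl⟩
      | tryVal V e N hV =>
        exact (regval_not_final hV htail hR).elim
      | tryDaimon =>
        have := redstar_daimon htail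
        subst this
        exact Or.inl ⟨rfl, Or.inl .refl⟩
    | tryL h =>
      rcases ih _ rfl with ⟨hRd, hT⟩ | ⟨ε, hRr, hne, hT⟩
      · exact Or.inl ⟨hRd, hT.imp (fun h' => .head h h') (fun h' => .head h h')⟩
      · exact Or.inr ⟨ε, hRr, hne, .head h hT⟩
    | tryR h => exact absurd h nr_daimon

lemma tryList_backward (L : List ExnName) :
    ∀ {T R}, (R = Tm.daimon ∨ ∃ ε, R = Tm.raise ε) →
    RedStar ((tryList L).fill T) R →
    ∃ R', RedStar T R' ∧
      ((R = Tm.daimon ∧ (R' = Tm.daimon ∨ ∃ ε ∈ L, R' = Tm.raise ε)) ∨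
       (∃ ε, R = Tm.raise ε ∧ R' = Tm.raise ε ∧ ε ∉ L)) := by
  induction L using List.reverseRecOn with
  | nil =>
    intro T R hR h
    refine ⟨R, h, ?_⟩
    rcases hR with rfl | ⟨ε, rfl⟩
    · exact Or.inl ⟨rfl, Or.inl rfl⟩
    · exact Or.inr ⟨ε, rfl, rfl, by simp⟩
  | append_singleton L a ih =>
    intro T R hR h
    rw [tryList_fill_append] at h
    rcases try_backward hR h _ rfl with ⟨hRd, hT | hT⟩ | ⟨ε, hRr, hne, hT⟩
    · rcases ih (Or.inl rfl) hT with ⟨R', hTR', hc⟩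
      rcases hc with ⟨_, hc⟩ | ⟨ε, hε, _⟩
      · refine ⟨R', hTR', Or.inl ⟨hRd, ?_⟩⟩
        rcases hc with rfl | ⟨ε, hεL, rfl⟩
        · exact Or.inl rfl
        · exact Or.inr ⟨ε, List.mem_append.2 (Or.inl hεL), rfl⟩
      · cases hε
    · rcases ih (Or.inr ⟨a, rfl⟩) hT with ⟨R', hTR', hc⟩
      rcases hc with ⟨h', _⟩ | ⟨ε, hε, hR', hεL⟩
      · cases h'
      · have : ε = a := by injection hε with h; exact h.symm
        subst this
        exact ⟨R', hTR', Or.inl ⟨hRd, Or.inr ⟨ε, List.mem_append.2 (Or.inr (by simp)), hR'⟩⟩⟩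
    · rcases ih (Or.inr ⟨ε, rfl⟩) hT with ⟨R', hTR', hc⟩
      rcases hc with ⟨h', _⟩ | ⟨ε', hε, hR', hεL⟩
      · cases h'
      · have : ε' = ε := by injection hε with h; exact h.symm
        subst this
        refine ⟨R', hTR', Or.inr ⟨ε', hRr, hR', ?_⟩⟩
        intro hmem
        rcases List.mem_append.1 hmem with h' | h'
        · exact hεL h'
        · exact hne (by simpa using h')

/-! #### The `natrec` machine -/

/-- Invariant for states reachable from `natrec ✠ (λy.λx.x) M`. -/
inductive St : Tm → Tm → Prop
  | base (M) : St (natrecT M) M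
  | wrapA (N : Tm) {P M} : St P M → St (Tm.app (Tm.app Y0 N) P) M
  | wrapL {P M} : St P M → St (Tm.app (Tm.lam (Tm.var 0)) P) M
  | finZ : St Tm.daimon Tm.zero
  | finD : St Tm.daimon Tm.daimon
  | finR (ε) : St (Tm.raise ε) (Tm.raise ε)

lemma St.step : ∀ {U M U'}, St U M → Red U U' →
    (∃ M', RedStar M M' ∧ St U' M') ∨
    (∃ N, M = Tm.app Tm.succ N ∧ St U' N) := by
  intro U M U' h
  induction h generalizing U' with
  | base M =>
    intro hr
    cases hr with
    | head h =>
      cases h with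
      | recZero => exact Or.inl ⟨Tm.zero, .refl, St.finZ⟩
      | recSucc X Y N => exact Or.inr ⟨N, rfl, St.wrapA N (St.base N)⟩
      | recRaise X Y e => exact Or.inl ⟨Tm.raise e, .refl, St.finR e⟩
      | recDaimon => exact Or.inl ⟨Tm.daimon, .refl, St.finD⟩
    | appL h => exact absurd h nr_natrec2
    | appR h => exact Or.inl ⟨_, .single h, St.base _⟩
  | wrapA N hP ih =>
    intro hr
    cases hr with
    | head h => cases h
    | appL h =>
      cases h with
      | head h =>
        cases h with
        | beta =>
          have : Tm.subst 0 N (Tm.lam (Tm.var 0)) = Tm.lam (Tm.var 0) := by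
            simp [Tm.subst]
          rw [this]
          exact Or.inl ⟨_, .refl, St.wrapL hP⟩
      | appL h => exact absurd h nr_Y0
      | appR h => exact Or.inl ⟨_, .refl, St.wrapA _ hP⟩
    | appR h =>
      rcases ih h with ⟨M', hMM', hSt⟩ | ⟨N', hM, hSt⟩
      · exact Or.inl ⟨M', hMM', St.wrapA N hSt⟩
      · exact Or.inr ⟨N', hM, St.wrapA N hSt⟩
  | wrapL hP ih =>
    intro hr
    cases hr with
    | head h =>
      cases h with
      | beta =>
        simp only [Tm.subst, if_pos rfl]
        exact Or.inl ⟨_, .refl, hP⟩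
    | appL h => exact absurd h nr_lamvar
    | appR h =>
      rcases ih h with ⟨M', hMM', hSt⟩ | ⟨N', hM, hSt⟩
      · exact Or.inl ⟨M', hMM', St.wrapL hSt⟩
      · exact Or.inr ⟨N', hM, St.wrapL hSt⟩
  | finZ => intro hr; exact absurd hr nr_daimon
  | finD => intro hr; exact absurd hr nr_daimon
  | finR ε => intro hr; exact absurd hr nr_raise

lemma st_final : ∀ {U R}, RedStar U R →
    (R = Tm.daimon ∨ ∃ ε, R = Tm.raise ε) →
    ∀ M, St U M →
    ∃ n Φ, ((R = Tm.daimon ∧ (Φ = Tm.zero ∨ Φ = Tm.daimon)) ∨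
            (∃ ε, R = Tm.raise ε ∧ Φ = Tm.raise ε)) ∧
      RedStar M ((Tm.app Tm.succ)^[n] Φ) := by
  intro U R h
  induction h using Relation.ReflTransGen.head_induction_on with
  | refl =>
    intro hR M hSt
    rcases hR with rfl | ⟨ε, rfl⟩
    · cases hSt with
      | finZ => exact ⟨0, Tm.zero, Or.inl ⟨rfl, Or.inl rfl⟩, .refl⟩
      | finD => exact ⟨0, Tm.daimon, Or.inl ⟨rfl, Or.inr rfl⟩, .refl⟩
    · cases hSt with
      | finR => exact ⟨0, Tm.raise ε, Or.inr ⟨ε, rfl, rfl⟩, .refl⟩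
  | head hstep htail ih =>
    intro hR M hSt
    rcases St.step hSt hstep with ⟨M', hMM', hSt'⟩ | ⟨N, rfl, hSt'⟩
    · rcases ih hR M' hSt' with ⟨n, Φ, hΦ, hred⟩
      exact ⟨n, Φ, hΦ, hMM'.trans hred⟩
    · rcases ih hR N hSt' with ⟨n, Φ, hΦ, hred⟩
      refine ⟨n + 1, Φ, hΦ, ?_⟩
      rw [Function.iterate_succ_apply']
      exact redstar_appR Tm.succ hred

/-! #### Forward reductions of the `natrec` machine -/

lemma natrec_succ_star (N : Tm) :
    RedStar (natrecT (Tm.app Tm.succ N)) (natrecT N) := by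
  have s1 : Red (natrecT (Tm.app Tm.succ N)) (Tm.app (Tm.app Y0 N) (natrecT N)) :=
    Red.head (Head.recSucc _ _ _)
  have s2 : Red (Tm.app (Tm.app Y0 N) (natrecT N))
      (Tm.app (Tm.lam (Tm.var 0)) (natrecT N)) := by
    have h := Red.appL (N := natrecT N) (Red.head (Head.beta (Tm.lam (Tm.var 0)) N))
    simpa [Tm.subst] using h
  have s3 : Red (Tm.app (Tm.lam (Tm.var 0)) (natrecT N)) (natrecT N) := by
    have h := Red.head (Head.beta (Tm.var 0) (natrecT N))
    simpa [Tm.subst] using h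
  exact .head s1 (.head s2 (.single s3))

lemma natrecT_iter (n : ℕ) (Φ : Tm) :
    RedStar (natrecT ((Tm.app Tm.succ)^[n] Φ)) (natrecT Φ) := by
  induction n with
  | zero => exact .refl
  | succ n ih =>
    rw [Function.iterate_succ_apply']
    exact (natrec_succ_star _).trans ih
/-- Characterization of the interpretation of corrupted `nat`:
`⟦{Δ}nat⟧ρ` is the set of terms reducing to `Sⁿ Φ` with `Φ` one of
`0`, `✠`, or `raise ε` for `ε ∈ Δ`. -/
theorem tmI_corrupt_nat (ρ : ℕ → Set Ctx) (hρ : ∀ i, (ρ i).Nonempty)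
    (Δ : Finset ExnName) :
    TmI (Ty.corrupt Δ Ty.nat) ρ =
      { M | ∃ (n : ℕ) (Φ : Tm),
          (Φ = Tm.zero ∨ Φ = Tm.daimon ∨ ∃ ε ∈ Δ, Φ = Tm.raise ε) ∧
          RedStar M ((Tm.app Tm.succ)^[n] Φ) } := by
  have hCtx : CtxI (Ty.corrupt Δ Ty.nat) ρ =
      {Ctx.comp (tryCtx Δ) (Ctx.recd Tm.daimon Y0 Ctx.hole)} := by
    simp [CtxI, liftS]
  ext M
  simp only [TmI, orth, hCtx, Set.mem_setOf_eq, Set.mem_singleton_iff]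
  constructor
  · intro h
    have hp := h _ rfl
    unfold Perp at hp
    rw [fill_comp] at hp
    have hp' : RedStar ((tryList (Δ.sort (· ≤ ·))).fill (natrecT M)) Tm.daimon := hp
    rcases tryList_backward _ (Or.inl rfl) hp' with ⟨R', hTR', hc⟩
    rcases hc with ⟨_, rfl | ⟨ε, hεL, rfl⟩⟩ | ⟨ε, hε, _⟩
    · rcases st_final hTR' (Or.inl rfl) M (St.base M) with ⟨n, Φ, hΦ, hred⟩
      rcases hΦ with ⟨_, hΦ⟩ | ⟨ε, hε, _⟩
      · exact ⟨n, Φ, hΦ.imp id Or.inl, hred⟩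
      · cases hε
    · rcases st_final hTR' (Or.inr ⟨ε, rfl⟩) M (St.base M) with ⟨n, Φ, hΦ, hred⟩
      rcases hΦ with ⟨h', _⟩ | ⟨ε', hε', hΦ⟩
      · cases h'
      · have : ε' = ε := by injection hε' with h'; exact h'.symm
        subst this
        exact ⟨n, Φ, Or.inr (Or.inr ⟨ε', (Finset.mem_sort _).1 hεL, hΦ⟩), hred⟩
    · cases hε
  · rintro ⟨n, Φ, hΦ, hred⟩ C hC
    rw [hC]
    unfold Perp
    rw [fill_comp]
    have h1 : RedStar (natrecT M) (natrecT Φ) :=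
      (redstar_appR _ hred).trans (natrecT_iter n Φ)
    have h2 : RedStar ((tryList (Δ.sort (· ≤ ·))).fill (natrecT M))
        ((tryList (Δ.sort (· ≤ ·))).fill (natrecT Φ)) := redstar_fill _ h1
    rcases hΦ with rfl | rfl | ⟨ε, hεΔ, rfl⟩
    · exact h2.trans ((redstar_fill _ (.single (Red.head (Head.recZero _ _)))).trans
        (tryList_daimon _))
    · exact h2.trans ((redstar_fill _ (.single (Red.head (Head.recDaimon _ _)))).trans
        (tryList_daimon _))
    · exact h2.trans ((redstar_fill _ (.single (Red.head (Head.recRaise _ _ _)))).trans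
        (tryList_raise_mem _ ε ((Finset.mem_sort _).2 hεΔ)))
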